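/- Suppose a C¹ function y : [0,T] → ℝ≥0 and nonnegative continuous functions g, h satisfy (1/2) d/dt (y(t)²) + g(t) ≤ h(t) + s(t)·y(t) for a nonnegative continuous s. Then y(T)² + 2∫₀ᵀ g dt ≤ y(0)² + 2∫₀ᵀ h dt + 2∫₀ᵀ s(t) y(t) dt, and consequently √(y(T)² + 2∫₀ᵀ g dt) ≤ (y(0)² + 2 sup_{0≤t≤T}∫₀ᵗ h ds)^{1/2} + ∫₀ᵀ s dt. -/

import Mathlib

open MeasureTheory

/-- Continuous-in-time energy estimate: if a `C¹` nonnegative `y` and nonnegative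
continuous `g, h, s` satisfy `(1/2) d/dt(y²) + g ≤ h + s·y` on `[0,T]`, then
`y(T)² + 2∫₀ᵀ g ≤ y(0)² + 2∫₀ᵀ h + 2∫₀ᵀ s y`, and consequently (by the
Gronwall-type Lemma 5.1)
`√(y(T)² + 2∫₀ᵀ g) ≤ (y(0)² + 2 sup_{0≤t≤T}∫₀ᵗ h)^{1/2} + ∫₀ᵀ s`. -/
theorem stmt16 (T : ℝ) (hT : 0 < T) (y g h s : ℝ → ℝ)
    (hy : ContDiff ℝ 1 y) (hynn : ∀ t, 0 ≤ y t)
    (hg : Continuous g) (hh : Continuous h) (hs : Continuous s)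
    (hgnn : ∀ t, 0 ≤ g t) (hhnn : ∀ t, 0 ≤ h t) (hsnn : ∀ t, 0 ≤ s t)
    (hineq : ∀ t ∈ Set.Icc (0:ℝ) T,
      (1 / 2) * deriv (fun r => y r ^ 2) t + g t ≤ h t + s t * y t) :
    (y T ^ 2 + 2 * ∫ t in (0:ℝ)..T, g t ≤
        y 0 ^ 2 + 2 * (∫ t in (0:ℝ)..T, h t) + 2 * ∫ t in (0:ℝ)..T, s t * y t) ∧
      Real.sqrt (y T ^ 2 + 2 * ∫ t in (0:ℝ)..T, g t) ≤
        Real.sqrt (y 0 ^ 2 + 2 * sSup ((fun r => ∫ t in (0:ℝ)..r, h t) '' Set.Icc 0 T)) +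
          ∫ t in (0:ℝ)..T, s t := by
  have hyc : Continuous y := hy.continuous
  have hsy : Continuous (fun t => s t * y t) := hs.mul hyc
  have hf : ContDiff ℝ 1 (fun r => y r ^ 2) := hy.pow 2
  have hfd : Differentiable ℝ (fun r => y r ^ 2) := hf.differentiable one_ne_zero
  have hfc : Continuous (deriv (fun r => y r ^ 2)) := hf.continuous_deriv le_rfl
  -- monotonicity of r ↦ ∫₀ʳ h
  have hmono : ∀ r ∈ Set.Icc (0:ℝ) T, (∫ t in (0:ℝ)..r, h t) ≤ ∫ t in (0:ℝ)..T, h t := by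
    intro r hr
    have h1 : (∫ t in (0:ℝ)..r, h t) + (∫ t in r..T, h t) = ∫ t in (0:ℝ)..T, h t :=
      intervalIntegral.integral_add_adjacent_intervals (hh.intervalIntegrable _ _)
        (hh.intervalIntegrable _ _)
    have h2 : 0 ≤ ∫ t in r..T, h t :=
      intervalIntegral.integral_nonneg hr.2 (fun u _ => hhnn u)
    linarith
  -- key energy inequality on [0, τ]
  have key : ∀ τ ∈ Set.Icc (0:ℝ) T,
      y τ ^ 2 + 2 * ∫ t in (0:ℝ)..τ, g t ≤
        y 0 ^ 2 + 2 * (∫ t in (0:ℝ)..τ, h t) + 2 * ∫ t in (0:ℝ)..τ, s t * y t := by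
    intro τ hτ
    have hftc : (∫ t in (0:ℝ)..τ, deriv (fun r => y r ^ 2) t) = y τ ^ 2 - y 0 ^ 2 :=
      intervalIntegral.integral_deriv_eq_sub (fun x _ => hfd x) (hfc.intervalIntegrable _ _)
    have hint : (∫ t in (0:ℝ)..τ, (deriv (fun r => y r ^ 2) t + 2 * g t)) ≤
        ∫ t in (0:ℝ)..τ, (2 * h t + 2 * (s t * y t)) := by
      apply intervalIntegral.integral_mono_on hτ.1
      · exact ((hfc.add ((continuous_const.mul hg))).intervalIntegrable _ _)
      · exact ((((continuous_const.mul hh)).add ((continuous_const.mul hsy))).intervalIntegrable _ _)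
      · intro x hx
        have := hineq x ⟨hx.1, hx.2.trans hτ.2⟩
        linarith
    rw [intervalIntegral.integral_add (g := fun t => 2 * g t) (hfc.intervalIntegrable _ _)
        (((continuous_const.mul hg)).intervalIntegrable _ _),
      intervalIntegral.integral_add (f := fun t => 2 * h t) (g := fun t => 2 * (s t * y t)) (((continuous_const.mul hh)).intervalIntegrable _ _)
        (((continuous_const.mul hsy)).intervalIntegrable _ _),
      intervalIntegral.integral_const_mul, intervalIntegral.integral_const_mul,
      intervalIntegral.integral_const_mul, hftc] at hint
    linarith
  have part1 := key T ⟨le_of_lt hT, le_rfl⟩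
  refine ⟨part1, ?_⟩
  -- the sSup equals ∫₀ᵀ h
  have hsup : sSup ((fun r => ∫ t in (0:ℝ)..r, h t) '' Set.Icc 0 T) = ∫ t in (0:ℝ)..T, h t := by
    apply IsGreatest.csSup_eq
    constructor
    · exact ⟨T, ⟨le_of_lt hT, le_rfl⟩, rfl⟩
    · rintro x ⟨r, hr, rfl⟩
      exact hmono r hr
  rw [hsup]
  set M : ℝ := y 0 ^ 2 + 2 * (∫ t in (0:ℝ)..T, h t) with hM
  have hMnn : 0 ≤ M := by
    have : 0 ≤ ∫ t in (0:ℝ)..T, h t :=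
      intervalIntegral.integral_nonneg (le_of_lt hT) (fun u _ => hhnn u)
    positivity
  -- ε-argument
  apply le_of_forall_pos_le_add
  intro ε hε
  have hε2 : (0:ℝ) < ε ^ 2 := by positivity
  set c : ℝ := M + ε ^ 2 with hc
  set I : ℝ → ℝ := fun t => ∫ x in (0:ℝ)..t, s x * y x with hI
  set u : ℝ → ℝ := fun t => c + 2 * I t with hu
  have hInn : ∀ t ∈ Set.Icc (0:ℝ) T, 0 ≤ I t := fun t ht =>
    intervalIntegral.integral_nonneg ht.1 (fun x _ => mul_nonneg (hsnn x) (hynn x))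
  have hupos : ∀ t ∈ Set.Icc (0:ℝ) T, 0 < u t := by
    intro t ht
    have := hInn t ht
    simp only [hu, hc]
    nlinarith
  have huderiv : ∀ t, HasDerivAt u (2 * (s t * y t)) t := by
    intro t
    have hI' : HasDerivAt I (s t * y t) t :=
      intervalIntegral.integral_hasDerivAt_right (hsy.intervalIntegrable _ _)
        (hsy.stronglyMeasurableAtFilter _ _) hsy.continuousAt
    exact (hI'.const_mul 2).const_add c
  -- y t ^ 2 ≤ u t on [0,T]
  have hyu : ∀ t ∈ Set.Icc (0:ℝ) T, y t ^ 2 ≤ u t := by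
    intro t ht
    have h1 := key t ht
    have h2 : 0 ≤ ∫ x in (0:ℝ)..t, g x :=
      intervalIntegral.integral_nonneg ht.1 (fun x _ => hgnn x)
    have h3 := hmono t ht
    simp only [hu, hc, hI, hM]
    nlinarith
  set v : ℝ → ℝ := fun t => Real.sqrt (u t) with hv
  set v' : ℝ → ℝ := fun t => 2 * (s t * y t) * (1 / (2 * Real.sqrt (u t))) with hv'
  have hvderiv : ∀ t ∈ Set.uIcc (0:ℝ) T, HasDerivAt v (v' t) t := by
    intro t ht
    rw [Set.uIcc_of_le (le_of_lt hT)] at ht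
    have hne : u t ≠ 0 := ne_of_gt (hupos t ht)
    have := (Real.hasDerivAt_sqrt hne).comp t (huderiv t)
    simpa [hv, hv', mul_comm, Function.comp_def] using this
  have huc : Continuous u := by
    have : Continuous I := intervalIntegral.continuous_primitive
      (fun a b => hsy.intervalIntegrable a b) 0
    exact continuous_const.add ((continuous_const.mul this))
  have hv'cont : ContinuousOn v' (Set.uIcc (0:ℝ) T) := by
    apply ContinuousOn.mul (((continuous_const.mul hsy)).continuousOn)
    apply ContinuousOn.div continuousOn_const
    · exact (continuous_const.mul huc.sqrt).continuousOn
    · intro x hx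
      rw [Set.uIcc_of_le (le_of_lt hT)] at hx
      have := hupos x hx
      positivity
  have hv'int : IntervalIntegrable v' volume 0 T :=
    hv'cont.intervalIntegrable
  have hftc2 : (∫ t in (0:ℝ)..T, v' t) = v T - v 0 :=
    intervalIntegral.integral_eq_sub_of_hasDerivAt hvderiv hv'int
  have hv'le : ∀ t ∈ Set.Icc (0:ℝ) T, v' t ≤ s t := by
    intro t ht
    have hup := hupos t ht
    have hsq : 0 < Real.sqrt (u t) := Real.sqrt_pos.mpr hup
    have hyle : y t ≤ Real.sqrt (u t) :=
      (Real.le_sqrt (hynn t) (le_of_lt hup)).mpr (hyu t ht)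
    have : v' t = s t * (y t / Real.sqrt (u t)) := by
      simp only [hv']; field_simp
    rw [this]
    have : y t / Real.sqrt (u t) ≤ 1 := (div_le_one hsq).mpr hyle
    nlinarith [hsnn t]
  have hintle : (∫ t in (0:ℝ)..T, v' t) ≤ ∫ t in (0:ℝ)..T, s t :=
    intervalIntegral.integral_mono_on (le_of_lt hT) hv'int (hs.intervalIntegrable _ _) hv'le
  -- E T ≤ u T
  have hET : y T ^ 2 + 2 * ∫ t in (0:ℝ)..T, g t ≤ u T := by
    simp only [hu, hc, hI, hM]
    nlinarith [part1, hε2]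
  have h5 : Real.sqrt (y T ^ 2 + 2 * ∫ t in (0:ℝ)..T, g t) ≤ v T :=
    Real.sqrt_le_sqrt hET
  have hv0 : v 0 = Real.sqrt c := by
    simp [hv, hu, hI]
  have hsqc : Real.sqrt c ≤ Real.sqrt M + ε := by
    have hsM := Real.sq_sqrt hMnn
    have hsMnn := Real.sqrt_nonneg M
    have : c ≤ (Real.sqrt M + ε) ^ 2 := by simp only [hc]; nlinarith
    calc Real.sqrt c ≤ Real.sqrt ((Real.sqrt M + ε) ^ 2) := Real.sqrt_le_sqrt this
      _ = Real.sqrt M + ε := Real.sqrt_sq (by positivity)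
  calc Real.sqrt (y T ^ 2 + 2 * ∫ t in (0:ℝ)..T, g t) ≤ v T := h5
    _ = v 0 + ∫ t in (0:ℝ)..T, v' t := by rw [hftc2]; ring
    _ ≤ Real.sqrt M + ε + ∫ t in (0:ℝ)..T, s t := by rw [hv0]; linarith
    _ = Real.sqrt M + (∫ t in (0:ℝ)..T, s t) + ε := by ring
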